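/- If R is a nonnegative submodular function on a ground set T of size k with R(∅) = 0, and T' is a uniformly random subset of T of size k−1, then E[R(T')] ≥ ((k−1)/k) · R(T). -/

import Mathlib

lemma sum_erase_ge {α : Type*} [DecidableEq α] (T : Finset α)
    (R : Finset α → ℝ)
    (hsub : ∀ X Y : Finset α, R (X ∪ Y) + R (X ∩ Y) ≤ R X + R Y) :
    ∀ S : Finset α, S ⊆ T →
      ∑ x ∈ S, R (T.erase x) ≥ (S.card : ℝ) * R T - R T + R (T \ S) := by
  intro S
  induction S using Finset.induction with
  | empty => intro _; simp
  | @insert a S ha ih =>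
    intro hsub'
    have haT : a ∈ T := hsub' (Finset.mem_insert_self a S)
    have hST : S ⊆ T := fun x hx => hsub' (Finset.mem_insert_of_mem hx)
    have key := hsub (T \ S) (T.erase a)
    have h1 : (T \ S) ∪ T.erase a = T := by
      ext x
      simp only [Finset.mem_union, Finset.mem_sdiff, Finset.mem_erase]
      constructor
      · rintro (⟨h, _⟩ | ⟨_, h⟩) <;> exact h
      · intro hx
        by_cases hxa : x = a
        · subst hxa
          exact Or.inl ⟨hx, ha⟩
        · exact Or.inr ⟨hxa, hx⟩
    have h2 : (T \ S) ∩ T.erase a = T \ insert a S := by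
      ext x
      simp only [Finset.mem_inter, Finset.mem_sdiff, Finset.mem_erase,
        Finset.mem_insert]
      tauto
    rw [h1, h2] at key
    rw [Finset.sum_insert ha, Finset.card_insert_of_notMem ha]
    have := ih hST
    push_cast
    nlinarith [this, key]

theorem stmt12 {α : Type*} [DecidableEq α] (T : Finset α) (k : ℕ)
    (hk : T.card = k) (hkpos : 0 < k)
    (R : Finset α → ℝ)
    (hnn : ∀ X : Finset α, 0 ≤ R X) (h0 : R ∅ = 0)
    (hsub : ∀ X Y : Finset α, R (X ∪ Y) + R (X ∩ Y) ≤ R X + R Y) :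
    ((T.powersetCard (k - 1)).card : ℝ)⁻¹ * ∑ T' ∈ T.powersetCard (k - 1), R T'
      ≥ (((k : ℝ) - 1) / k) * R T := by
  have hcard : (T.powersetCard (k - 1)).card = k := by
    rw [Finset.card_powersetCard, hk, Nat.choose_symm hkpos, Nat.choose_one_right]
  have himg : T.powersetCard (k - 1) = T.image T.erase := by
    ext T'
    simp only [Finset.mem_powersetCard, Finset.mem_image]
    constructor
    · rintro ⟨hsub', hcard'⟩
      have hsd : (T \ T').card = 1 := by
        rw [Finset.card_sdiff_of_subset hsub', hk, hcard']
        omega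
      obtain ⟨x, hx⟩ := Finset.card_eq_one.mp hsd
      have hxT : x ∈ T := by
        have : x ∈ T \ T' := hx ▸ Finset.mem_singleton_self x
        exact (Finset.mem_sdiff.mp this).1
      refine ⟨x, hxT, ?_⟩
      ext y
      simp only [Finset.mem_erase]
      constructor
      · rintro ⟨hyx, hyT⟩
        by_contra hyT'
        have : y ∈ T \ T' := Finset.mem_sdiff.mpr ⟨hyT, hyT'⟩
        rw [hx, Finset.mem_singleton] at this
        exact hyx this
      · intro hyT'
        have hyT : y ∈ T := hsub' hyT'
        refine ⟨?_, hyT⟩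
        rintro rfl
        have : y ∈ T \ T' := hx ▸ Finset.mem_singleton_self y
        exact (Finset.mem_sdiff.mp this).2 hyT'
    · rintro ⟨x, hxT, rfl⟩
      exact ⟨Finset.erase_subset _ _, by rw [Finset.card_erase_of_mem hxT, hk]⟩
  have hinj : ∀ x ∈ T, ∀ y ∈ T, T.erase x = T.erase y → x = y := by
    intro x hx y hy h
    by_contra hxy
    have : x ∈ T.erase y := Finset.mem_erase.mpr ⟨hxy, hx⟩
    rw [← h] at this
    exact (Finset.mem_erase.mp this).1 rfl
  have hsum : ∑ T' ∈ T.powersetCard (k - 1), R T' = ∑ x ∈ T, R (T.erase x) := by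
    rw [himg, Finset.sum_image hinj]
  have hkey := sum_erase_ge T R hsub T (le_refl T)
  rw [Finset.sdiff_self, h0, hk] at hkey
  rw [hcard, hsum]
  have hk0 : (0:ℝ) < k := by exact_mod_cast hkpos
  rw [ge_iff_le, div_mul_eq_mul_div, div_le_iff₀ hk0, inv_mul_eq_div,
    div_mul_eq_mul_div, le_div_iff₀ hk0, mul_comm]
  nlinarith [hkey, hnn T]
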